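/- arXiv:2307.09710 — 4 statements merged into one kernel-verified Lean document; each statement's English description precedes it below -/
import Mathlib

section
/- Let μ₁, μ₂, μ₃ be probability measures on ℝ with finite first moments, and let c ∈ C_lin(ℝ²). For the set I of intermediate marginals that do not improve the lower price bound, i.e., I := { μ₂ : μ₁ ⪯ μ₂ ⪯ μ₃ and inf over ℚ ∈ M(μ₁,μ₂,μ₃) of E_ℚ[c(S₁,S₃)] = inf over ℚ ∈ M(μ₁,μ₃) of E_ℚ[c(S₁,S₃)] }, the set I is convex: if ν, ν' ∈ I and λ ∈ (0,1), then λν + (1−λ)ν' ∈ I. -/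
open MeasureTheory

def BddCont (f : ℝ → ℝ) : Prop :=
  Continuous f ∧ ∃ M : ℝ, ∀ x, |f x| ≤ M

def BddCont2 (f : ℝ × ℝ → ℝ) : Prop :=
  Continuous f ∧ ∃ M : ℝ, ∀ p, |f p| ≤ M

/-- A three-period martingale measure on `ℝ³` with prescribed marginals. -/
def IsMM3 (Q : Measure (ℝ × ℝ × ℝ)) (μ₁ μ₂ μ₃ : Measure ℝ) : Prop :=
  IsProbabilityMeasure Q ∧
  Q.map (fun p => p.1) = μ₁ ∧ Q.map (fun p => p.2.1) = μ₂ ∧ Q.map (fun p => p.2.2) = μ₃ ∧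
  Integrable (fun p : ℝ × ℝ × ℝ => p.1) Q ∧
  Integrable (fun p : ℝ × ℝ × ℝ => p.2.1) Q ∧
  Integrable (fun p : ℝ × ℝ × ℝ => p.2.2) Q ∧
  (∀ Δ : ℝ → ℝ, BddCont Δ → ∫ p : ℝ × ℝ × ℝ, Δ p.1 * (p.2.1 - p.1) ∂Q = 0) ∧
  (∀ Δ : ℝ × ℝ → ℝ, BddCont2 Δ →
    ∫ p : ℝ × ℝ × ℝ, Δ (p.1, p.2.1) * (p.2.2 - p.2.1) ∂Q = 0)

/-- A two-period martingale measure on `ℝ²` with prescribed marginals. -/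
def IsMM2 (Q : Measure (ℝ × ℝ)) (μ₁ μ₃ : Measure ℝ) : Prop :=
  IsProbabilityMeasure Q ∧
  Q.map Prod.fst = μ₁ ∧ Q.map Prod.snd = μ₃ ∧
  Integrable (fun p : ℝ × ℝ => p.1) Q ∧ Integrable (fun p : ℝ × ℝ => p.2) Q ∧
  ∀ Δ : ℝ → ℝ, BddCont Δ → ∫ p : ℝ × ℝ, Δ p.1 * (p.2 - p.1) ∂Q = 0
/-- Continuous functions of linear growth on `ℝ²`. -/
def CLin2 (c : ℝ × ℝ → ℝ) : Prop :=
  Continuous c ∧ ∃ L : ℝ, ∀ p : ℝ × ℝ, |c p| ≤ L * (1 + |p.1| + |p.2|)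

/-- Convex order of probability measures on `ℝ`. -/
def ConvOrder (μ ν : Measure ℝ) : Prop :=
  ∀ f : ℝ → ℝ, ConvexOn ℝ Set.univ f → Integrable f μ → Integrable f ν →
    ∫ x, f x ∂μ ≤ ∫ x, f x ∂ν

/-- Values of the three-marginal MOT problem for a payoff depending on the
first and third coordinates. -/
def MotVal3 (μ₁ μ₂ μ₃ : Measure ℝ) (c : ℝ × ℝ → ℝ) : Set ℝ :=
  {r : ℝ | ∃ Q : Measure (ℝ × ℝ × ℝ), IsMM3 Q μ₁ μ₂ μ₃ ∧
    r = ∫ p : ℝ × ℝ × ℝ, c (p.1, p.2.2) ∂Q}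

/-- Values of the two-marginal MOT problem. -/
def MotVal2 (μ₁ μ₃ : Measure ℝ) (c : ℝ × ℝ → ℝ) : Set ℝ :=
  {r : ℝ | ∃ Q : Measure (ℝ × ℝ), IsMM2 Q μ₁ μ₃ ∧ r = ∫ p : ℝ × ℝ, c p ∂Q}

namespace MOTAux

lemma abs_int_eq {α : Type*} [MeasurableSpace α] {Q : Measure α} {g : α → ℝ}
    (hg : Measurable g) (μ : Measure ℝ) (h : Q.map g = μ) :
    ∫ x, |x| ∂μ = ∫ p, |g p| ∂Q := by
  rw [← h, integral_map hg.aemeasurable (continuous_abs.aestronglyMeasurable)]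

lemma integrable_c3 {Q : Measure (ℝ × ℝ × ℝ)} {μ₁ μ₂ μ₃ : Measure ℝ} {c : ℝ × ℝ → ℝ}
    (hQ : IsMM3 Q μ₁ μ₂ μ₃) (hc : CLin2 c) :
    Integrable (fun p : ℝ × ℝ × ℝ => c (p.1, p.2.2)) Q := by
  obtain ⟨hP, hm1, hm2, hm3, hi1, hi2, hi3, hM1, hM2⟩ := hQ
  obtain ⟨L, hL⟩ := hc.2
  have hmeas : AEStronglyMeasurable (fun p : ℝ × ℝ × ℝ => c (p.1, p.2.2)) Q :=
    (hc.1.comp (by fun_prop)).aestronglyMeasurable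
  have hint : Integrable (fun p : ℝ × ℝ × ℝ => |L| * (1 + |p.1| + |p.2.2|)) Q :=
    (((integrable_const (1:ℝ)).add hi1.abs).add hi3.abs).const_mul _
  refine hint.mono' hmeas (Filter.Eventually.of_forall fun p => ?_)
  have h1 := hL (p.1, p.2.2)
  have h2 : (0:ℝ) ≤ 1 + |p.1| + |p.2.2| := by positivity
  have h3 : L * (1 + |p.1| + |p.2.2|) ≤ |L| * (1 + |p.1| + |p.2.2|) :=
    mul_le_mul_of_nonneg_right (le_abs_self L) h2
  simpa [Real.norm_eq_abs] using h1.trans h3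

lemma val3_bound {Q : Measure (ℝ × ℝ × ℝ)} {μ₁ μ₂ μ₃ : Measure ℝ} {c : ℝ × ℝ → ℝ} {L : ℝ}
    (hQ : IsMM3 Q μ₁ μ₂ μ₃) (hc : Continuous c)
    (hL : ∀ p : ℝ × ℝ, |c p| ≤ L * (1 + |p.1| + |p.2|)) :
    |∫ p : ℝ × ℝ × ℝ, c (p.1, p.2.2) ∂Q| ≤
      |L| * (1 + ∫ x, |x| ∂μ₁ + ∫ x, |x| ∂μ₃) := by
  have hci : Integrable (fun p : ℝ × ℝ × ℝ => c (p.1, p.2.2)) Q :=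
    integrable_c3 hQ ⟨hc, L, hL⟩
  obtain ⟨hP, hm1, hm2, hm3, hi1, hi2, hi3, hM1, hM2⟩ := hQ
  have hint : Integrable (fun p : ℝ × ℝ × ℝ => |L| * (1 + |p.1| + |p.2.2|)) Q :=
    (((integrable_const (1:ℝ)).add hi1.abs).add hi3.abs).const_mul _
  have h1 : |∫ p : ℝ × ℝ × ℝ, c (p.1, p.2.2) ∂Q| ≤
      ∫ p : ℝ × ℝ × ℝ, |c (p.1, p.2.2)| ∂Q := by
    simpa [Real.norm_eq_abs] using
      norm_integral_le_integral_norm (μ := Q) (fun p : ℝ × ℝ × ℝ => c (p.1, p.2.2))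
  have h2 : ∫ p : ℝ × ℝ × ℝ, |c (p.1, p.2.2)| ∂Q ≤
      ∫ p : ℝ × ℝ × ℝ, |L| * (1 + |p.1| + |p.2.2|) ∂Q := by
    refine integral_mono hci.abs hint fun p => ?_
    have h3 : (0:ℝ) ≤ 1 + |p.1| + |p.2.2| := by positivity
    exact (hL (p.1, p.2.2)).trans (mul_le_mul_of_nonneg_right (le_abs_self L) h3)
  have h4 : ∫ p : ℝ × ℝ × ℝ, |L| * (1 + |p.1| + |p.2.2|) ∂Q =
      |L| * (1 + ∫ x, |x| ∂μ₁ + ∫ x, |x| ∂μ₃) := by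
    have ha : Integrable (fun p : ℝ × ℝ × ℝ => 1 + |p.1|) Q :=
      (integrable_const (1:ℝ)).add hi1.abs
    have hb : Integrable (fun p : ℝ × ℝ × ℝ => 1 + |p.1| + |p.2.2|) Q := ha.add hi3.abs
    rw [integral_const_mul, integral_add ha hi3.abs, integral_add (integrable_const (1:ℝ)) hi1.abs,
      abs_int_eq (by fun_prop) μ₁ hm1, abs_int_eq (by fun_prop) μ₃ hm3]
    simp
  linarith

lemma val2_bound {Q : Measure (ℝ × ℝ)} {μ₁ μ₃ : Measure ℝ} {c : ℝ × ℝ → ℝ} {L : ℝ}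
    (hQ : IsMM2 Q μ₁ μ₃) (hc : Continuous c)
    (hL : ∀ p : ℝ × ℝ, |c p| ≤ L * (1 + |p.1| + |p.2|)) :
    |∫ p : ℝ × ℝ, c p ∂Q| ≤ |L| * (1 + ∫ x, |x| ∂μ₁ + ∫ x, |x| ∂μ₃) := by
  obtain ⟨hP, hm1, hm3, hi1, hi3, hM⟩ := hQ
  have hint : Integrable (fun p : ℝ × ℝ => |L| * (1 + |p.1| + |p.2|)) Q :=
    (((integrable_const (1:ℝ)).add hi1.abs).add hi3.abs).const_mul _
  have hci : Integrable c Q := by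
    refine hint.mono' hc.aestronglyMeasurable (Filter.Eventually.of_forall fun p => ?_)
    have h3 : (0:ℝ) ≤ 1 + |p.1| + |p.2| := by positivity
    simpa [Real.norm_eq_abs] using
      (hL p).trans (mul_le_mul_of_nonneg_right (le_abs_self L) h3)
  have h1 : |∫ p : ℝ × ℝ, c p ∂Q| ≤ ∫ p : ℝ × ℝ, |c p| ∂Q := by
    simpa [Real.norm_eq_abs] using norm_integral_le_integral_norm (μ := Q) c
  have h2 : ∫ p : ℝ × ℝ, |c p| ∂Q ≤ ∫ p : ℝ × ℝ, |L| * (1 + |p.1| + |p.2|) ∂Q := by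
    refine integral_mono hci.abs hint fun p => ?_
    have h3 : (0:ℝ) ≤ 1 + |p.1| + |p.2| := by positivity
    exact (hL p).trans (mul_le_mul_of_nonneg_right (le_abs_self L) h3)
  have h4 : ∫ p : ℝ × ℝ, |L| * (1 + |p.1| + |p.2|) ∂Q =
      |L| * (1 + ∫ x, |x| ∂μ₁ + ∫ x, |x| ∂μ₃) := by
    have ha : Integrable (fun p : ℝ × ℝ => 1 + |p.1|) Q :=
      (integrable_const (1:ℝ)).add hi1.abs
    rw [integral_const_mul, integral_add ha hi3.abs, integral_add (integrable_const (1:ℝ)) hi1.abs,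
      abs_int_eq measurable_fst μ₁ hm1, abs_int_eq measurable_snd μ₃ hm3]
    simp
  linarith

end MOTAux

namespace MOTAux

lemma integrable_bdd_mul {α : Type*} [MeasurableSpace α] {Q : Measure α} {φ ψ : α → ℝ}
    (hφm : AEStronglyMeasurable φ Q) (hb : ∃ M, ∀ x, |φ x| ≤ M) (hψ : Integrable ψ Q) :
    Integrable (fun x => φ x * ψ x) Q :=
  hψ.bdd_mul hφm (c := hb.choose) (Filter.Eventually.of_forall fun x => by simpa [Real.norm_eq_abs] using hb.choose_spec x)

lemma isMM2_map {Q : Measure (ℝ × ℝ × ℝ)} {μ₁ μ₂ μ₃ : Measure ℝ}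
    (hQ : IsMM3 Q μ₁ μ₂ μ₃) :
    IsMM2 (Q.map (fun p : ℝ × ℝ × ℝ => (p.1, p.2.2))) μ₁ μ₃ ∧
    ∀ c : ℝ × ℝ → ℝ, Continuous c →
      ∫ p : ℝ × ℝ, c p ∂(Q.map (fun p : ℝ × ℝ × ℝ => (p.1, p.2.2)))
        = ∫ p : ℝ × ℝ × ℝ, c (p.1, p.2.2) ∂Q := by
  obtain ⟨hP, hm1, hm2, hm3, hi1, hi2, hi3, hM1, hM2⟩ := hQ
  have hg : Measurable (fun p : ℝ × ℝ × ℝ => (p.1, p.2.2)) := by fun_prop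
  have hval : ∀ c : ℝ × ℝ → ℝ, Continuous c →
      ∫ p : ℝ × ℝ, c p ∂(Q.map (fun p : ℝ × ℝ × ℝ => (p.1, p.2.2)))
        = ∫ p : ℝ × ℝ × ℝ, c (p.1, p.2.2) ∂Q := fun c hc =>
    integral_map hg.aemeasurable hc.aestronglyMeasurable
  refine ⟨⟨Measure.isProbabilityMeasure_map hg.aemeasurable, ?_, ?_, ?_, ?_, ?_⟩, hval⟩
  · rw [Measure.map_map measurable_fst hg]; exact hm1
  · rw [Measure.map_map measurable_snd hg]; exact hm3
  · exact (integrable_map_measure continuous_fst.aestronglyMeasurable hg.aemeasurable).2 hi1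
  · exact (integrable_map_measure continuous_snd.aestronglyMeasurable hg.aemeasurable).2 hi3
  · intro Δ hΔ
    obtain ⟨M, hM⟩ := hΔ.2
    have h0 : ∫ p : ℝ × ℝ, Δ p.1 * (p.2 - p.1) ∂(Q.map (fun p : ℝ × ℝ × ℝ => (p.1, p.2.2)))
        = ∫ p : ℝ × ℝ × ℝ, Δ p.1 * (p.2.2 - p.1) ∂Q :=
      hval _ ((hΔ.1.comp continuous_fst).mul (continuous_snd.sub continuous_fst))
    rw [h0]
    have hf1 : Integrable (fun p : ℝ × ℝ × ℝ => Δ p.1 * (p.2.1 - p.1)) Q :=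
      integrable_bdd_mul ((hΔ.1.comp continuous_fst).aestronglyMeasurable)
        ⟨M, fun p => hM p.1⟩ (hi2.sub hi1)
    have hf2 : Integrable (fun p : ℝ × ℝ × ℝ => Δ p.1 * (p.2.2 - p.2.1)) Q :=
      integrable_bdd_mul ((hΔ.1.comp continuous_fst).aestronglyMeasurable)
        ⟨M, fun p => hM p.1⟩ (hi3.sub hi2)
    have he : ∀ p : ℝ × ℝ × ℝ, Δ p.1 * (p.2.2 - p.1)
        = Δ p.1 * (p.2.1 - p.1) + Δ p.1 * (p.2.2 - p.2.1) := fun p => by ring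
    rw [show (fun p : ℝ × ℝ × ℝ => Δ p.1 * (p.2.2 - p.1))
        = fun p : ℝ × ℝ × ℝ => Δ p.1 * (p.2.1 - p.1) + Δ p.1 * (p.2.2 - p.2.1)
        from funext he]
    rw [integral_add hf1 hf2, hM1 Δ hΔ,
      hM2 (fun q : ℝ × ℝ => Δ q.1) ⟨hΔ.1.comp continuous_fst, M, fun q => hM q.1⟩]
    ring

lemma ofReal_lam_facts {lam : ℝ} (h0 : 0 < lam) (h1 : lam < 1) :
    ENNReal.ofReal lam + ENNReal.ofReal (1 - lam) = 1 ∧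
    ENNReal.ofReal lam ≠ 0 ∧ ENNReal.ofReal (1 - lam) ≠ 0 := by
  refine ⟨?_, ?_, ?_⟩
  · rw [← ENNReal.ofReal_add h0.le (by linarith)]
    norm_num
  · simp [ENNReal.ofReal_eq_zero]; linarith
  · simp [ENNReal.ofReal_eq_zero]; linarith

lemma mix_integral {α : Type*} [MeasurableSpace α] {Qa Qb : Measure α} {lam : ℝ}
    (h0 : 0 < lam) (h1 : lam < 1) {f : α → ℝ}
    (hfa : Integrable f Qa) (hfb : Integrable f Qb) :
    ∫ x, f x ∂(ENNReal.ofReal lam • Qa + ENNReal.ofReal (1 - lam) • Qb)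
      = lam * ∫ x, f x ∂Qa + (1 - lam) * ∫ x, f x ∂Qb := by
  rw [integral_add_measure (hfa.smul_measure ENNReal.ofReal_ne_top)
    (hfb.smul_measure ENNReal.ofReal_ne_top), integral_smul_measure, integral_smul_measure,
    ENNReal.toReal_ofReal h0.le, ENNReal.toReal_ofReal (by linarith : (0:ℝ) ≤ 1 - lam)]
  simp [smul_eq_mul]

lemma mix_integrable {α : Type*} [MeasurableSpace α] {Qa Qb : Measure α} {lam : ℝ}
    (h0 : 0 < lam) (h1 : lam < 1) {f : α → ℝ}
    (h : Integrable f (ENNReal.ofReal lam • Qa + ENNReal.ofReal (1 - lam) • Qb)) :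
    Integrable f Qa ∧ Integrable f Qb := by
  obtain ⟨ha, hb⟩ := integrable_add_measure.mp h
  constructor
  · exact (integrable_smul_measure (by simp [ENNReal.ofReal_eq_zero]; linarith)
      ENNReal.ofReal_ne_top).mp ha
  · exact (integrable_smul_measure (by simp [ENNReal.ofReal_eq_zero]; linarith)
      ENNReal.ofReal_ne_top).mp hb

lemma isMM3_mix {Qa Qb : Measure (ℝ × ℝ × ℝ)} {μ₁ ν ν' μ₃ : Measure ℝ} {lam : ℝ}
    (h0 : 0 < lam) (h1 : lam < 1)
    (hQa : IsMM3 Qa μ₁ ν μ₃) (hQb : IsMM3 Qb μ₁ ν' μ₃) :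
    IsMM3 (ENNReal.ofReal lam • Qa + ENNReal.ofReal (1 - lam) • Qb) μ₁
      (ENNReal.ofReal lam • ν + ENNReal.ofReal (1 - lam) • ν') μ₃ := by
  obtain ⟨hPa, hm1a, hm2a, hm3a, hi1a, hi2a, hi3a, hM1a, hM2a⟩ := hQa
  obtain ⟨hPb, hm1b, hm2b, hm3b, hi1b, hi2b, hi3b, hM1b, hM2b⟩ := hQb
  obtain ⟨hab, hane, hbne⟩ := ofReal_lam_facts h0 h1
  have hmap : ∀ (g : ℝ × ℝ × ℝ → ℝ), Measurable g → ∀ (ma mb : Measure ℝ),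
      Qa.map g = ma → Qb.map g = mb →
      (ENNReal.ofReal lam • Qa + ENNReal.ofReal (1 - lam) • Qb).map g
        = ENNReal.ofReal lam • ma + ENNReal.ofReal (1 - lam) • mb := by
    intro g hg ma mb hma hmb
    rw [Measure.map_add _ _ hg, Measure.map_smul, Measure.map_smul, hma, hmb]
  have hmix_int : ∀ (f : ℝ × ℝ × ℝ → ℝ), Integrable f Qa → Integrable f Qb →
      Integrable f (ENNReal.ofReal lam • Qa + ENNReal.ofReal (1 - lam) • Qb) :=
    fun f ha hb => (ha.smul_measure ENNReal.ofReal_ne_top).add_measure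
      (hb.smul_measure ENNReal.ofReal_ne_top)
  refine ⟨?_, ?_, ?_, ?_, ?_, ?_, ?_, ?_, ?_⟩
  · constructor
    simp [Measure.add_apply, Measure.smul_apply, hPa.measure_univ, hPb.measure_univ,
      smul_eq_mul, hab]
  · rw [hmap _ (by fun_prop) _ _ hm1a hm1b, ← add_smul, hab, one_smul]
  · rw [hmap _ (by fun_prop) _ _ hm2a hm2b]
  · rw [hmap _ (by fun_prop) _ _ hm3a hm3b, ← add_smul, hab, one_smul]
  · exact hmix_int _ hi1a hi1b
  · exact hmix_int _ hi2a hi2b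
  · exact hmix_int _ hi3a hi3b
  · intro Δ hΔ
    obtain ⟨M, hM⟩ := hΔ.2
    have hfa : Integrable (fun p : ℝ × ℝ × ℝ => Δ p.1 * (p.2.1 - p.1)) Qa :=
      integrable_bdd_mul ((hΔ.1.comp continuous_fst).aestronglyMeasurable)
        ⟨M, fun p => hM p.1⟩ (hi2a.sub hi1a)
    have hfb : Integrable (fun p : ℝ × ℝ × ℝ => Δ p.1 * (p.2.1 - p.1)) Qb :=
      integrable_bdd_mul ((hΔ.1.comp continuous_fst).aestronglyMeasurable)
        ⟨M, fun p => hM p.1⟩ (hi2b.sub hi1b)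
    rw [mix_integral h0 h1 hfa hfb, hM1a Δ hΔ, hM1b Δ hΔ]
    ring
  · intro Δ hΔ
    obtain ⟨M, hM⟩ := hΔ.2
    have hcont : Continuous (fun p : ℝ × ℝ × ℝ => Δ (p.1, p.2.1)) :=
      hΔ.1.comp (by fun_prop)
    have hfa : Integrable (fun p : ℝ × ℝ × ℝ => Δ (p.1, p.2.1) * (p.2.2 - p.2.1)) Qa :=
      integrable_bdd_mul hcont.aestronglyMeasurable
        ⟨M, fun p => hM (p.1, p.2.1)⟩ (hi3a.sub hi2a)
    have hfb : Integrable (fun p : ℝ × ℝ × ℝ => Δ (p.1, p.2.1) * (p.2.2 - p.2.1)) Qb :=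
      integrable_bdd_mul hcont.aestronglyMeasurable
        ⟨M, fun p => hM (p.1, p.2.1)⟩ (hi3b.sub hi2b)
    rw [mix_integral h0 h1 hfa hfb, hM2a Δ hΔ, hM2b Δ hΔ]
    ring

end MOTAux

/-- The set of intermediate marginals that do not improve the lower price bound
is convex. -/
theorem stmt_6 (μ₁ μ₃ : Measure ℝ) [IsProbabilityMeasure μ₁] [IsProbabilityMeasure μ₃]
    (hμ₁ : Integrable (fun x : ℝ => x) μ₁) (hμ₃ : Integrable (fun x : ℝ => x) μ₃)
    (c : ℝ × ℝ → ℝ) (hc : CLin2 c)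
    (hne : ∃ Q : Measure (ℝ × ℝ), IsMM2 Q μ₁ μ₃)
    (I : Set (Measure ℝ))
    (hI : I = {μ₂ : Measure ℝ | ConvOrder μ₁ μ₂ ∧ ConvOrder μ₂ μ₃ ∧
      sInf (MotVal3 μ₁ μ₂ μ₃ c) = sInf (MotVal2 μ₁ μ₃ c)})
    (ν ν' : Measure ℝ) [IsProbabilityMeasure ν] [IsProbabilityMeasure ν']
    (hν : ν ∈ I) (hν' : ν' ∈ I)
    (hattν : ∃ Q : Measure (ℝ × ℝ × ℝ), IsMM3 Q μ₁ ν μ₃ ∧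
      (∫ p : ℝ × ℝ × ℝ, c (p.1, p.2.2) ∂Q) = sInf (MotVal3 μ₁ ν μ₃ c))
    (hattν' : ∃ Q : Measure (ℝ × ℝ × ℝ), IsMM3 Q μ₁ ν' μ₃ ∧
      (∫ p : ℝ × ℝ × ℝ, c (p.1, p.2.2) ∂Q) = sInf (MotVal3 μ₁ ν' μ₃ c))
    (lam : ℝ) (hlam : lam ∈ Set.Ioo (0 : ℝ) 1) :
    (ENNReal.ofReal lam • ν + ENNReal.ofReal (1 - lam) • ν') ∈ I := by
  obtain ⟨hlam0, hlam1⟩ := hlam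
  subst hI
  obtain ⟨hν1, hν2, hν3⟩ := hν
  obtain ⟨hν'1, hν'2, hν'3⟩ := hν'
  obtain ⟨Qa, hQa, hQaval⟩ := hattν
  obtain ⟨Qb, hQb, hQbval⟩ := hattν'
  obtain ⟨L, hL⟩ := hc.2
  set μ₂ := ENNReal.ofReal lam • ν + ENNReal.ofReal (1 - lam) • ν' with hμ₂
  have hmix : IsMM3 (ENNReal.ofReal lam • Qa + ENNReal.ofReal (1 - lam) • Qb) μ₁ μ₂ μ₃ :=
    MOTAux.isMM3_mix hlam0 hlam1 hQa hQb
  -- value of the mixed martingale measure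
  have hvmix : ∫ p : ℝ × ℝ × ℝ, c (p.1, p.2.2)
        ∂(ENNReal.ofReal lam • Qa + ENNReal.ofReal (1 - lam) • Qb)
      = lam * ∫ p : ℝ × ℝ × ℝ, c (p.1, p.2.2) ∂Qa
        + (1 - lam) * ∫ p : ℝ × ℝ × ℝ, c (p.1, p.2.2) ∂Qb :=
    MOTAux.mix_integral hlam0 hlam1 (MOTAux.integrable_c3 hQa hc) (MOTAux.integrable_c3 hQb hc)
  set m := sInf (MotVal2 μ₁ μ₃ c) with hm
  have hvala : ∫ p : ℝ × ℝ × ℝ, c (p.1, p.2.2) ∂Qa = m := by rw [hQaval, hν3]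
  have hvalb : ∫ p : ℝ × ℝ × ℝ, c (p.1, p.2.2) ∂Qb = m := by rw [hQbval, hν'3]
  have hmem : m ∈ MotVal3 μ₁ μ₂ μ₃ c := by
    refine ⟨_, hmix, ?_⟩
    rw [hvmix, hvala, hvalb]; ring
  have hbdd3 : BddBelow (MotVal3 μ₁ μ₂ μ₃ c) := by
    refine ⟨-(|L| * (1 + ∫ x, |x| ∂μ₁ + ∫ x, |x| ∂μ₃)), fun r hr => ?_⟩
    obtain ⟨Q, hQ, rfl⟩ := hr
    have := MOTAux.val3_bound hQ hc.1 hL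
    exact neg_le_of_abs_le this
  have hbdd2 : BddBelow (MotVal2 μ₁ μ₃ c) := by
    refine ⟨-(|L| * (1 + ∫ x, |x| ∂μ₁ + ∫ x, |x| ∂μ₃)), fun r hr => ?_⟩
    obtain ⟨Q, hQ, rfl⟩ := hr
    have := MOTAux.val2_bound hQ hc.1 hL
    exact neg_le_of_abs_le this
  refine ⟨?_, ?_, ?_⟩
  · -- ConvOrder μ₁ μ₂
    intro f hconv hf1 hf2
    obtain ⟨hfν, hfν'⟩ := MOTAux.mix_integrable hlam0 hlam1 hf2
    have e := MOTAux.mix_integral hlam0 hlam1 hfν hfν'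
    have h1 := hν1 f hconv hf1 hfν
    have h2 := hν'1 f hconv hf1 hfν'
    have h3 := mul_le_mul_of_nonneg_left h1 hlam0.le
    have h4 := mul_le_mul_of_nonneg_left h2 (by linarith : (0:ℝ) ≤ 1 - lam)
    rw [e]; linarith
  · -- ConvOrder μ₂ μ₃
    intro f hconv hf2 hf3
    obtain ⟨hfν, hfν'⟩ := MOTAux.mix_integrable hlam0 hlam1 hf2
    have e := MOTAux.mix_integral hlam0 hlam1 hfν hfν'
    have h1 := hν2 f hconv hfν hf3
    have h2 := hν'2 f hconv hfν' hf3
    have h3 := mul_le_mul_of_nonneg_left h1 hlam0.le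
    have h4 := mul_le_mul_of_nonneg_left h2 (by linarith : (0:ℝ) ≤ 1 - lam)
    rw [e]; linarith
  · -- inf equality
    refine le_antisymm (csInf_le hbdd3 hmem) ?_
    refine le_csInf ⟨m, hmem⟩ ?_
    rintro r ⟨Q, hQ, rfl⟩
    obtain ⟨hQ2, hval2⟩ := MOTAux.isMM2_map hQ
    rw [← hval2 c hc.1]
    exact csInf_le hbdd2 ⟨_, hQ2, rfl⟩
end

section
/- Let μ₁, μ₂, μ₃ be probability measures on ℝ with finite first moments increasing in convex order, and let c ∈ C_lin(ℝ²). Suppose that for every u ∈ L¹(μ₂) there exists λ_u ∈ [0,1] such that ∫u dμ₂ = λ_u ∫u dμ₁ + (1−λ_u) ∫u dμ₃. Then inf over ℚ ∈ M(μ₁,μ₂,μ₃) of E_ℚ[c(S₁,S₃)] = inf over ℚ ∈ M(μ₁,μ₃) of E_ℚ[c(S₁,S₃)]. -/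
open MeasureTheory

lemma clin_integrable {Q : Measure (ℝ × ℝ)} [IsProbabilityMeasure Q]
    {c : ℝ × ℝ → ℝ} (hc : CLin2 c)
    (h1 : Integrable (fun p : ℝ × ℝ => p.1) Q)
    (h2 : Integrable (fun p : ℝ × ℝ => p.2) Q) : Integrable c Q := by
  obtain ⟨hcont, L, hL⟩ := hc
  have hg : Integrable (fun p : ℝ × ℝ => L * (1 + |p.1| + |p.2|)) Q :=
    (((integrable_const (1:ℝ)).add h1.abs).add h2.abs).const_mul L
  refine hg.mono hcont.aestronglyMeasurable ?_
  filter_upwards with p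
  rw [Real.norm_eq_abs, Real.norm_eq_abs]
  exact (hL p).trans (le_abs_self _)

lemma motval3_subset (μ₁ μ₂ μ₃ : Measure ℝ) (c : ℝ × ℝ → ℝ) (hc : CLin2 c) :
    MotVal3 μ₁ μ₂ μ₃ c ⊆ MotVal2 μ₁ μ₃ c := by
  rintro r ⟨Q, ⟨hP, hm1, hm2, hm3, hi1, hi2, hi3, hmg1, hmg2⟩, rfl⟩
  haveI := hP
  set φ : ℝ × ℝ × ℝ → ℝ × ℝ := fun p => (p.1, p.2.2) with hφdef
  have hφm : Measurable φ := measurable_fst.prodMk (measurable_snd.comp measurable_snd)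
  refine ⟨Q.map φ, ⟨Measure.isProbabilityMeasure_map hφm.aemeasurable, ?_, ?_, ?_, ?_, ?_⟩, ?_⟩
  · rw [Measure.map_map measurable_fst hφm]; exact hm1
  · rw [Measure.map_map measurable_snd hφm]; exact hm3
  · exact (integrable_map_measure measurable_fst.aestronglyMeasurable hφm.aemeasurable).mpr hi1
  · exact (integrable_map_measure measurable_snd.aestronglyMeasurable hφm.aemeasurable).mpr hi3
  · intro Δ hΔ
    obtain ⟨hΔc, M, hM⟩ := hΔ
    have hmeas : AEStronglyMeasurable (fun p : ℝ × ℝ => Δ p.1 * (p.2 - p.1)) (Q.map φ) :=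
      ((hΔc.comp continuous_fst).mul (continuous_snd.sub continuous_fst)).aestronglyMeasurable
    rw [integral_map hφm.aemeasurable hmeas]
    have hA : Integrable (fun p : ℝ × ℝ × ℝ => Δ p.1 * (p.2.2 - p.2.1)) Q :=
      (hi3.sub hi2).bdd_mul (c := M) (hΔc.comp continuous_fst).aestronglyMeasurable
        (ae_of_all _ fun p => by simpa using hM p.1)
    have hB : Integrable (fun p : ℝ × ℝ × ℝ => Δ p.1 * (p.2.1 - p.1)) Q :=
      (hi2.sub hi1).bdd_mul (c := M) (hΔc.comp continuous_fst).aestronglyMeasurable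
        (ae_of_all _ fun p => by simpa using hM p.1)
    have key : (fun p : ℝ × ℝ × ℝ => Δ (φ p).1 * ((φ p).2 - (φ p).1)) =
        fun p : ℝ × ℝ × ℝ => Δ p.1 * (p.2.2 - p.2.1) + Δ p.1 * (p.2.1 - p.1) := by
      funext p; simp only [hφdef]; ring
    rw [key, integral_add hA hB,
      hmg2 (fun q => Δ q.1) ⟨hΔc.comp continuous_fst, M, fun q => hM q.1⟩,
      hmg1 Δ ⟨hΔc, M, hM⟩, add_zero]
  · exact (integral_map hφm.aemeasurable hc.1.aestronglyMeasurable).symm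

lemma motval2_subset (μ₁ μ₂ μ₃ : Measure ℝ)
    [IsProbabilityMeasure μ₁] [IsProbabilityMeasure μ₃]
    (c : ℝ × ℝ → ℝ) (hc : CLin2 c) (lam : ℝ) (h0 : 0 ≤ lam) (h1 : lam ≤ 1)
    (hμ : μ₂ = ENNReal.ofReal lam • μ₁ + ENNReal.ofReal (1 - lam) • μ₃) :
    MotVal2 μ₁ μ₃ c ⊆ MotVal3 μ₁ μ₂ μ₃ c := by
  rintro r ⟨Q, ⟨hP, hm1, hm3, hi1, hi2, hmg⟩, rfl⟩
  haveI := hP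
  set a : ENNReal := ENNReal.ofReal lam with ha
  set b : ENNReal := ENNReal.ofReal (1 - lam) with hb
  have hab : a + b = 1 := by
    rw [ha, hb, ← ENNReal.ofReal_add h0 (by linarith)]
    norm_num
  have hane : a ≠ ⊤ := ENNReal.ofReal_ne_top
  have hbne : b ≠ ⊤ := ENNReal.ofReal_ne_top
  have hatr : a.toReal = lam := ENNReal.toReal_ofReal h0
  have hbtr : b.toReal = 1 - lam := ENNReal.toReal_ofReal (by linarith)
  set f : ℝ × ℝ → ℝ × ℝ × ℝ := fun q => (q.1, q.1, q.2) with hfdef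
  set g : ℝ × ℝ → ℝ × ℝ × ℝ := fun q => (q.1, q.2, q.2) with hgdef
  have hfm : Measurable f := measurable_fst.prodMk (measurable_fst.prodMk measurable_snd)
  have hgm : Measurable g := measurable_fst.prodMk (measurable_snd.prodMk measurable_snd)
  set Q3 : Measure (ℝ × ℝ × ℝ) := a • Q.map f + b • Q.map g with hQ3
  haveI : IsProbabilityMeasure (Q.map f) := Measure.isProbabilityMeasure_map hfm.aemeasurable
  haveI : IsProbabilityMeasure (Q.map g) := Measure.isProbabilityMeasure_map hgm.aemeasurable
  -- generic integrability transfer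
  have hint : ∀ F : ℝ × ℝ × ℝ → ℝ, Continuous F → Integrable (F ∘ f) Q → Integrable (F ∘ g) Q →
      Integrable F Q3 := by
    intro F hF hFf hFg
    exact (((integrable_map_measure hF.aestronglyMeasurable hfm.aemeasurable).mpr
      hFf).smul_measure hane).add_measure
      (((integrable_map_measure hF.aestronglyMeasurable hgm.aemeasurable).mpr
      hFg).smul_measure hbne)
  -- generic integral splitting
  have hsplit : ∀ F : ℝ × ℝ × ℝ → ℝ, Continuous F → Integrable (F ∘ f) Q →
      Integrable (F ∘ g) Q →
      ∫ p, F p ∂Q3 = lam * ∫ q, F (f q) ∂Q + (1 - lam) * ∫ q, F (g q) ∂Q := by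
    intro F hF hFf hFg
    rw [hQ3, integral_add_measure
      (((integrable_map_measure hF.aestronglyMeasurable hfm.aemeasurable).mpr
        hFf).smul_measure hane)
      (((integrable_map_measure hF.aestronglyMeasurable hgm.aemeasurable).mpr
        hFg).smul_measure hbne),
      integral_smul_measure, integral_smul_measure, hatr, hbtr,
      integral_map hfm.aemeasurable hF.aestronglyMeasurable,
      integral_map hgm.aemeasurable hF.aestronglyMeasurable]
    simp [smul_eq_mul]
  have hcQ : Integrable c Q := clin_integrable hc hi1 hi2
  refine ⟨Q3, ⟨?_, ?_, ?_, ?_, ?_, ?_, ?_, ?_, ?_⟩, ?_⟩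
  · constructor
    simp only [hQ3, Measure.add_apply, Measure.smul_apply, measure_univ, smul_eq_mul, mul_one]
    exact hab
  · -- first marginal
    rw [hQ3, Measure.map_add _ _ measurable_fst, Measure.map_smul, Measure.map_smul,
      Measure.map_map measurable_fst hfm, Measure.map_map measurable_fst hgm]
    have e1 : (fun p : ℝ × ℝ × ℝ => p.1) ∘ f = Prod.fst := rfl
    have e2 : (fun p : ℝ × ℝ × ℝ => p.1) ∘ g = Prod.fst := rfl
    rw [e1, e2, hm1, ← add_smul, hab, one_smul]
  · -- second marginal
    have hπ : Measurable (fun p : ℝ × ℝ × ℝ => p.2.1) := measurable_snd.fst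
    rw [hQ3, Measure.map_add _ _ hπ, Measure.map_smul, Measure.map_smul,
      Measure.map_map hπ hfm, Measure.map_map hπ hgm,
      show ((fun p : ℝ × ℝ × ℝ => p.2.1) ∘ f) = Prod.fst from rfl,
      show ((fun p : ℝ × ℝ × ℝ => p.2.1) ∘ g) = Prod.snd from rfl, hm1, hm3, hμ]
  · -- third marginal
    have hπ : Measurable (fun p : ℝ × ℝ × ℝ => p.2.2) := measurable_snd.snd
    rw [hQ3, Measure.map_add _ _ hπ, Measure.map_smul, Measure.map_smul,
      Measure.map_map hπ hfm, Measure.map_map hπ hgm,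
      show ((fun p : ℝ × ℝ × ℝ => p.2.2) ∘ f) = Prod.snd from rfl,
      show ((fun p : ℝ × ℝ × ℝ => p.2.2) ∘ g) = Prod.snd from rfl, hm3,
      ← add_smul, hab, one_smul]
  · exact hint _ continuous_fst hi1 hi1
  · exact hint _ (continuous_fst.comp continuous_snd) hi1 hi2
  · exact hint _ (continuous_snd.comp continuous_snd) hi2 hi2
  · -- first martingale condition
    intro Δ hΔ
    obtain ⟨hΔc, M, hM⟩ := hΔ
    have hF : Continuous (fun p : ℝ × ℝ × ℝ => Δ p.1 * (p.2.1 - p.1)) :=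
      (hΔc.comp continuous_fst).mul
        ((continuous_fst.comp continuous_snd).sub continuous_fst)
    have hFf : Integrable ((fun p : ℝ × ℝ × ℝ => Δ p.1 * (p.2.1 - p.1)) ∘ f) Q := by
      have : ((fun p : ℝ × ℝ × ℝ => Δ p.1 * (p.2.1 - p.1)) ∘ f) = fun _ => 0 := by
        funext q; simp [hfdef]
      rw [this]; exact integrable_const 0
    have hFg : Integrable ((fun p : ℝ × ℝ × ℝ => Δ p.1 * (p.2.1 - p.1)) ∘ g) Q := by
      have : ((fun p : ℝ × ℝ × ℝ => Δ p.1 * (p.2.1 - p.1)) ∘ g) =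
          fun q : ℝ × ℝ => Δ q.1 * (q.2 - q.1) := rfl
      rw [this]
      exact (hi2.sub hi1).bdd_mul (c := M) (hΔc.comp continuous_fst).aestronglyMeasurable
        (ae_of_all _ fun q => by simpa using hM q.1)
    rw [hsplit _ hF hFf hFg]
    have e1 : ∫ q : ℝ × ℝ, Δ (f q).1 * ((f q).2.1 - (f q).1) ∂Q = 0 := by
      simp [hfdef]
    have e2 : ∫ q : ℝ × ℝ, Δ (g q).1 * ((g q).2.1 - (g q).1) ∂Q = 0 := hmg Δ ⟨hΔc, M, hM⟩
    rw [e1, e2]; ring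
  · -- second martingale condition
    intro Δ hΔ
    obtain ⟨hΔc, M, hM⟩ := hΔ
    have hF : Continuous (fun p : ℝ × ℝ × ℝ => Δ (p.1, p.2.1) * (p.2.2 - p.2.1)) :=
      (hΔc.comp (continuous_fst.prodMk (continuous_fst.comp continuous_snd))).mul
        ((continuous_snd.comp continuous_snd).sub (continuous_fst.comp continuous_snd))
    have hFf : Integrable ((fun p : ℝ × ℝ × ℝ => Δ (p.1, p.2.1) * (p.2.2 - p.2.1)) ∘ f) Q := by
      have : ((fun p : ℝ × ℝ × ℝ => Δ (p.1, p.2.1) * (p.2.2 - p.2.1)) ∘ f) =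
          fun q : ℝ × ℝ => Δ (q.1, q.1) * (q.2 - q.1) := rfl
      rw [this]
      exact (hi2.sub hi1).bdd_mul (c := M)
        ((hΔc.comp (continuous_fst.prodMk continuous_fst))).aestronglyMeasurable
        (ae_of_all _ fun q => by simpa using hM (q.1, q.1))
    have hFg : Integrable ((fun p : ℝ × ℝ × ℝ => Δ (p.1, p.2.1) * (p.2.2 - p.2.1)) ∘ g) Q := by
      have : ((fun p : ℝ × ℝ × ℝ => Δ (p.1, p.2.1) * (p.2.2 - p.2.1)) ∘ g) = fun _ => 0 := by
        funext q; simp [hgdef]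
      rw [this]; exact integrable_const 0
    rw [hsplit _ hF hFf hFg]
    have e1 : ∫ q : ℝ × ℝ, Δ ((f q).1, (f q).2.1) * ((f q).2.2 - (f q).2.1) ∂Q = 0 := by
      have : (fun q : ℝ × ℝ => Δ ((f q).1, (f q).2.1) * ((f q).2.2 - (f q).2.1)) =
          fun q : ℝ × ℝ => (fun x => Δ (x, x)) q.1 * (q.2 - q.1) := rfl
      rw [this]
      exact hmg (fun x => Δ (x, x))
        ⟨hΔc.comp (continuous_id.prodMk continuous_id), M, fun x => hM (x, x)⟩
    have e2 : ∫ q : ℝ × ℝ, Δ ((g q).1, (g q).2.1) * ((g q).2.2 - (g q).2.1) ∂Q = 0 := by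
      simp [hgdef]
    rw [e1, e2]; ring
  · -- cost
    have hF : Continuous (fun p : ℝ × ℝ × ℝ => c (p.1, p.2.2)) :=
      hc.1.comp (continuous_fst.prodMk (continuous_snd.comp continuous_snd))
    have hFf : Integrable ((fun p : ℝ × ℝ × ℝ => c (p.1, p.2.2)) ∘ f) Q := by
      have : ((fun p : ℝ × ℝ × ℝ => c (p.1, p.2.2)) ∘ f) = c := by
        funext q; simp [hfdef]
      rw [this]; exact hcQ
    have hFg : Integrable ((fun p : ℝ × ℝ × ℝ => c (p.1, p.2.2)) ∘ g) Q := by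
      have : ((fun p : ℝ × ℝ × ℝ => c (p.1, p.2.2)) ∘ g) = c := by
        funext q; simp [hgdef]
      rw [this]; exact hcQ
    rw [hsplit _ hF hFf hFg]
    have e1 : ∫ q : ℝ × ℝ, c ((f q).1, (f q).2.2) ∂Q = ∫ q : ℝ × ℝ, c q ∂Q := by
      apply integral_congr_ae; filter_upwards with q; simp [hfdef]
    have e2 : ∫ q : ℝ × ℝ, c ((g q).1, (g q).2.2) ∂Q = ∫ q : ℝ × ℝ, c q ∂Q := by
      apply integral_congr_ae; filter_upwards with q; simp [hgdef]
    rw [e1, e2]; ring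

/-- If `μ₂` is a linear interpolation of `μ₁` and `μ₃` on every integrand, then
the intermediate marginal does not improve the lower price bound. -/
theorem stmt_9 (μ₁ μ₂ μ₃ : Measure ℝ)
    [IsProbabilityMeasure μ₁] [IsProbabilityMeasure μ₂] [IsProbabilityMeasure μ₃]
    (hμ₁ : Integrable (fun x : ℝ => x) μ₁) (hμ₂ : Integrable (fun x : ℝ => x) μ₂)
    (hμ₃ : Integrable (fun x : ℝ => x) μ₃)
    (h12 : ConvOrder μ₁ μ₂) (h23 : ConvOrder μ₂ μ₃)
    (c : ℝ × ℝ → ℝ) (hc : CLin2 c)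
    (hinterp : ∀ u : ℝ → ℝ, Integrable u μ₂ → ∃ lam : ℝ, lam ∈ Set.Icc (0 : ℝ) 1 ∧
      ∫ x, u x ∂μ₂ = lam * ∫ x, u x ∂μ₁ + (1 - lam) * ∫ x, u x ∂μ₃) :
    sInf (MotVal3 μ₁ μ₂ μ₃ c) = sInf (MotVal2 μ₁ μ₃ c) := by
  -- Step 1: a uniform interpolation coefficient.
  have key : ∃ lam : ℝ, 0 ≤ lam ∧ lam ≤ 1 ∧
      ∀ u : ℝ → ℝ, Integrable u μ₁ → Integrable u μ₂ → Integrable u μ₃ →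
        ∫ x, u x ∂μ₂ = lam * ∫ x, u x ∂μ₁ + (1 - lam) * ∫ x, u x ∂μ₃ := by
    by_cases hB : ∀ u : ℝ → ℝ, Integrable u μ₁ → Integrable u μ₂ → Integrable u μ₃ →
        ∫ x, u x ∂μ₁ = ∫ x, u x ∂μ₃
    · refine ⟨1, zero_le_one, le_refl 1, fun u hu1 hu2 hu3 => ?_⟩
      obtain ⟨l, _, he⟩ := hinterp u hu2
      rw [he, hB u hu1 hu2 hu3]; ring
    · push_neg at hB
      obtain ⟨u₀, h01, h02, h03, hne⟩ := hB
      obtain ⟨l, ⟨hl0, hl1⟩, he0⟩ := hinterp u₀ h02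
      refine ⟨l, hl0, hl1, fun u hu1 hu2 hu3 => ?_⟩
      have hden : (∫ x, u₀ x ∂μ₁ - ∫ x, u₀ x ∂μ₃) ≠ 0 := sub_ne_zero.mpr hne
      set s : ℝ := -(∫ x, u x ∂μ₁ - ∫ x, u x ∂μ₃) / (∫ x, u₀ x ∂μ₁ - ∫ x, u₀ x ∂μ₃)
        with hs
      have h1 : s * (∫ x, u₀ x ∂μ₁ - ∫ x, u₀ x ∂μ₃) = -(∫ x, u x ∂μ₁ - ∫ x, u x ∂μ₃) := by
        rw [hs, div_mul_cancel₀ _ hden]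
      set v : ℝ → ℝ := fun x => u x + s * u₀ x with hv
      have hv1 : Integrable v μ₁ := hu1.add (h01.const_mul s)
      have hv2 : Integrable v μ₂ := hu2.add (h02.const_mul s)
      have hv3 : Integrable v μ₃ := hu3.add (h03.const_mul s)
      have I1v : ∫ x, v x ∂μ₁ = ∫ x, u x ∂μ₁ + s * ∫ x, u₀ x ∂μ₁ := by
        rw [hv]; rw [integral_add hu1 (h01.const_mul s), integral_const_mul]
      have I2v : ∫ x, v x ∂μ₂ = ∫ x, u x ∂μ₂ + s * ∫ x, u₀ x ∂μ₂ := by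
        rw [hv]; rw [integral_add hu2 (h02.const_mul s), integral_const_mul]
      have I3v : ∫ x, v x ∂μ₃ = ∫ x, u x ∂μ₃ + s * ∫ x, u₀ x ∂μ₃ := by
        rw [hv]; rw [integral_add hu3 (h03.const_mul s), integral_const_mul]
      obtain ⟨m, _, hev⟩ := hinterp v hv2
      have hBv : ∫ x, v x ∂μ₁ = ∫ x, v x ∂μ₃ := by
        rw [I1v, I3v]; linarith [h1]
      have h2 : ∫ x, u x ∂μ₂ + s * ∫ x, u₀ x ∂μ₂ =
          ∫ x, u x ∂μ₃ + s * ∫ x, u₀ x ∂μ₃ := by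
        have : ∫ x, v x ∂μ₂ = ∫ x, v x ∂μ₃ := by
          rw [hev, ← hBv] ; ring
        rw [I2v, I3v] at this; linarith [this]
      linear_combination h2 - s * he0 - l * h1
  obtain ⟨lam, hl0, hl1, hlam⟩ := key
  -- Step 2: μ₂ is the lam-mixture of μ₁ and μ₃.
  have hμ : μ₂ = ENNReal.ofReal lam • μ₁ + ENNReal.ofReal (1 - lam) • μ₃ := by
    ext t ht
    have hu := hlam (t.indicator fun _ => (1:ℝ))
      ((integrable_const (1:ℝ)).indicator ht) ((integrable_const (1:ℝ)).indicator ht)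
      ((integrable_const (1:ℝ)).indicator ht)
    rw [integral_indicator_const (1:ℝ) ht, integral_indicator_const (1:ℝ) ht,
      integral_indicator_const (1:ℝ) ht] at hu
    simp only [smul_eq_mul, mul_one] at hu
    have hfin1 : μ₁ t ≠ ⊤ := (measure_lt_top μ₁ t).ne
    have hfin3 : μ₃ t ≠ ⊤ := (measure_lt_top μ₃ t).ne
    have hrhs : (ENNReal.ofReal lam • μ₁ + ENNReal.ofReal (1 - lam) • μ₃) t =
        ENNReal.ofReal lam * μ₁ t + ENNReal.ofReal (1 - lam) * μ₃ t := by
      simp [Measure.add_apply, Measure.smul_apply, smul_eq_mul]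
    rw [hrhs]
    have hne : ENNReal.ofReal lam * μ₁ t + ENNReal.ofReal (1 - lam) * μ₃ t ≠ ⊤ :=
      ENNReal.add_ne_top.mpr ⟨ENNReal.mul_ne_top ENNReal.ofReal_ne_top hfin1,
        ENNReal.mul_ne_top ENNReal.ofReal_ne_top hfin3⟩
    rw [← ENNReal.toReal_eq_toReal_iff' (measure_lt_top μ₂ t).ne hne]
    rw [ENNReal.toReal_add (ENNReal.mul_ne_top ENNReal.ofReal_ne_top hfin1)
      (ENNReal.mul_ne_top ENNReal.ofReal_ne_top hfin3),
      ENNReal.toReal_mul, ENNReal.toReal_mul, ENNReal.toReal_ofReal hl0,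
      ENNReal.toReal_ofReal (by linarith : (0:ℝ) ≤ 1 - lam)]
    exact hu
  -- Step 3: equality of value sets.
  have hset : MotVal3 μ₁ μ₂ μ₃ c = MotVal2 μ₁ μ₃ c :=
    Set.Subset.antisymm (motval3_subset μ₁ μ₂ μ₃ c hc)
      (motval2_subset μ₁ μ₂ μ₃ c hc lam hl0 hl1 hμ)
  rw [hset]
end

section
/- Let μ₁ be the uniform distribution on [−1,1] and μ₂ := Law(S₂), where conditional on S₁ ∼ μ₁ the random variable S₂ equals S₁ with probability 1−t, equals (3/2)S₁ + 1/2 with probability (3/4)t, and equals −(1/2)S₁ − 3/2 with probability (1/4)t, for a fixed t ∈ [0,1]. Then for every bounded measurable u : ℝ → ℝ, E[u(S₂)] = (1−t)·E_{μ₁}[u] + t·E_{μ₃}[u], where μ₃ is the uniform distribution on [−2,2]. -/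
open MeasureTheory
open scoped ENNReal

/-- The martingale linear interpolation of `U([-1,1])` towards `U([-2,2])`:
for every bounded measurable test function `u`, the expectation of `u(S₂)`
equals the `(1-t, t)`-mixture of the expectations under `μ₁` and `μ₃`. -/
theorem stmt_10 (μ₁ μ₃ : Measure ℝ)
    (hμ₁ : μ₁ = ((2 : ℝ≥0∞)⁻¹) • volume.restrict (Set.Icc (-1 : ℝ) 1))
    (hμ₃ : μ₃ = ((4 : ℝ≥0∞)⁻¹) • volume.restrict (Set.Icc (-2 : ℝ) 2))
    (t : ℝ) (ht : t ∈ Set.Icc (0 : ℝ) 1)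
    (u : ℝ → ℝ) (hu : Measurable u) (hub : ∃ M : ℝ, ∀ x, |u x| ≤ M) :
    ∫ x, ((1 - t) * u x + (3 / 4) * t * u ((3 / 2) * x + 1 / 2)
        + (1 / 4) * t * u (-(1 / 2) * x - 3 / 2)) ∂μ₁
      = (1 - t) * (∫ x, u x ∂μ₁) + t * (∫ x, u x ∂μ₃) := by
  obtain ⟨M, hM⟩ := hub
  have key : ∀ (g : ℝ → ℝ), Measurable g → (∀ x, |g x| ≤ M) →
      ∀ a b : ℝ, IntervalIntegrable g volume a b := by
    intro g hg hgb a b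
    constructor <;>
    · refine ⟨hg.aestronglyMeasurable.restrict, ?_⟩
      exact HasFiniteIntegral.of_bounded (C := M)
        (ae_of_all _ fun x => by simpa [Real.norm_eq_abs] using hgb x)
  have hu2 : Measurable fun x : ℝ => u ((3/2) * x + 1/2) :=
    hu.comp ((measurable_const.mul measurable_id).add measurable_const)
  have hu3 : Measurable fun x : ℝ => u (-(1/2) * x - 3/2) :=
    hu.comp ((measurable_const.mul measurable_id).sub measurable_const)
  have k1 := key u hu hM
  have k2 := key _ hu2 (fun x => hM _)
  have k3 := key _ hu3 (fun x => hM _)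
  have hIcc : ∀ (g : ℝ → ℝ) (a b : ℝ), a ≤ b →
      (∫ x in Set.Icc a b, g x) = ∫ x in a..b, g x := by
    intro g a b hab
    rw [intervalIntegral.integral_of_le hab, MeasureTheory.integral_Icc_eq_integral_Ioc]
  rw [hμ₁, hμ₃, integral_smul_measure, integral_smul_measure, integral_smul_measure]
  rw [hIcc _ _ _ (by norm_num), hIcc _ _ _ (by norm_num), hIcc _ _ _ (by norm_num)]
  have hsplit : (∫ x in (-1:ℝ)..1, ((1 - t) * u x + (3 / 4) * t * u ((3 / 2) * x + 1 / 2)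
        + (1 / 4) * t * u (-(1 / 2) * x - 3 / 2)))
      = (1 - t) * (∫ x in (-1:ℝ)..1, u x)
        + (3/4) * t * (∫ x in (-1:ℝ)..1, u ((3/2) * x + 1/2))
        + (1/4) * t * (∫ x in (-1:ℝ)..1, u (-(1/2) * x - 3/2)) := by
    rw [intervalIntegral.integral_add (((k1 _ _).const_mul _).add ((k2 _ _).const_mul _))
      ((k3 _ _).const_mul _),
      intervalIntegral.integral_add ((k1 _ _).const_mul _) ((k2 _ _).const_mul _),
      intervalIntegral.integral_const_mul, intervalIntegral.integral_const_mul,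
      intervalIntegral.integral_const_mul]
  rw [hsplit]
  have hI2 : (∫ x in (-1:ℝ)..1, u ((3/2) * x + 1/2)) = (2/3) * ∫ x in (-1:ℝ)..2, u x := by
    rw [intervalIntegral.integral_comp_mul_add u (by norm_num : (3/2:ℝ) ≠ 0) (1/2)]
    norm_num
  have hI3 : (∫ x in (-1:ℝ)..1, u (-(1/2) * x - 3/2)) = 2 * ∫ x in (-2:ℝ)..(-1), u x := by
    have : (fun x : ℝ => u (-(1/2) * x - 3/2)) = fun x => u ((-(1/2)) * x + (-(3/2))) := by
      funext x; ring_nf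
    rw [this, intervalIntegral.integral_comp_mul_add u (by norm_num : (-(1/2):ℝ) ≠ 0) (-(3/2))]
    rw [show (-(1/2) : ℝ) * (-1) + -(3/2) = -1 by norm_num,
      show (-(1/2) : ℝ) * 1 + -(3/2) = -2 by norm_num]
    rw [intervalIntegral.integral_symm]
    simp
  have hadj : (∫ x in (-2:ℝ)..2, u x)
      = (∫ x in (-2:ℝ)..(-1), u x) + ∫ x in (-1:ℝ)..2, u x :=
    (intervalIntegral.integral_add_adjacent_intervals (k1 _ _) (k1 _ _)).symm
  rw [hI2, hI3, hadj]
  simp only [ENNReal.toReal_inv]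
  norm_num
  ring
end

section
/- With strikes, prices, weights w_j and the discrete measure μ* = Σⱼ w_j δ_{K_j} as in the discrete Breeden–Litzenberger construction (0 = K₀ < ⋯ < K_m, S₀ = Π₀ ≥ ⋯ ≥ Π_m = 0, convex prices, boundary slope conventions 0 and −1), it holds that ∫(x − K_j)⁺ dμ*(x) = Π_j for every j = 0,…,m. -/
open MeasureTheory
open scoped ENNReal

/-- Right slope `(Π_{j+1} - Π_j)/(K_{j+1} - K_j)` of the call prices, with the
convention that the slope to the right of the last strike is `0`. -/
noncomputable def rslope (m : ℕ) (K P : ℕ → ℝ) (j : ℕ) : ℝ :=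
  if j < m then (P (j + 1) - P j) / (K (j + 1) - K j) else 0

/-- Left slope, with the convention that the slope to the left of the first
strike is `-1`. -/
noncomputable def lslope (m : ℕ) (K P : ℕ → ℝ) (j : ℕ) : ℝ :=
  if j = 0 then -1 else rslope m K P (j - 1)

/-- The Breeden–Litzenberger weights. -/
noncomputable def wBL (m : ℕ) (K P : ℕ → ℝ) (j : ℕ) : ℝ :=
  rslope m K P j - lslope m K P j

/-- Telescoping sum of the weights. -/
lemma wBL_tele (m : ℕ) (K P : ℕ → ℝ) (j : ℕ) (hj : j ≤ m) :
    ∑ k ∈ Finset.Ico (j + 1) (m + 1), wBL m K P k = - rslope m K P j := by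
  have h1 : ∀ k ∈ Finset.Ico (j + 1) (m + 1),
      wBL m K P k = rslope m K P k - rslope m K P (k - 1) := by
    intro k hk
    simp only [Finset.mem_Ico] at hk
    unfold wBL lslope
    rw [if_neg (by omega)]
  rw [Finset.sum_congr rfl h1, Finset.sum_Ico_eq_sum_range]
  have h2 : ∑ i ∈ Finset.range (m + 1 - (j + 1)),
      (rslope m K P (j + 1 + i) - rslope m K P (j + 1 + i - 1))
      = ∑ i ∈ Finset.range (m - j),
      (rslope m K P (j + (i + 1)) - rslope m K P (j + i)) := by
    apply Finset.sum_congr (by congr 1; omega)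
    intro i _
    have e1 : j + 1 + i = j + (i + 1) := by omega
    have e2 : j + 1 + i - 1 = j + i := by omega
    rw [e2, e1]
  rw [h2, Finset.sum_range_sub (fun i => rslope m K P (j + i))]
  have e3 : j + (m - j) = m := by omega
  have e4 : j + 0 = j := by omega
  rw [e3, e4]
  have : rslope m K P m = 0 := by unfold rslope; rw [if_neg (by omega)]
  rw [this]
  ring

/-- The discrete Breeden–Litzenberger measure reprices all the given call
options exactly. -/
theorem stmt_14 (m : ℕ) (hm : 1 ≤ m) (K P : ℕ → ℝ) (S₀ : ℝ)
    (hK0 : K 0 = 0) (hKmono : ∀ j < m, K j < K (j + 1))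
    (hP0 : P 0 = S₀) (hPm : P m = 0) (hPdec : ∀ j < m, P (j + 1) ≤ P j)
    (hconv : ∀ j < m, lslope m K P j ≤ rslope m K P j) :
    ∀ j ≤ m,
      (∫ x, max (x - K j) 0
        ∂(∑ k ∈ Finset.range (m + 1),
            ENNReal.ofReal (wBL m K P k) • Measure.dirac (K k))) = P j := by
  -- K is monotone on [0, m]
  have hKle : ∀ b ≤ m, ∀ a ≤ b, K a ≤ K b := by
    intro b
    induction b with
    | zero => intro _ a ha; simp [Nat.le_zero.mp ha]
    | succ n ih =>
      intro hbm a ha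
      rcases Nat.eq_or_lt_of_le ha with h | h
      · rw [h]
      · exact le_trans (ih (by omega) a (by omega)) (le_of_lt (hKmono n (by omega)))
  -- the weights are nonnegative
  have hw : ∀ k ≤ m, 0 ≤ wBL m K P k := by
    intro k hk
    rcases lt_or_eq_of_le hk with h | h
    · exact sub_nonneg.mpr (hconv k h)
    · rw [h]
      have hm1 : m - 1 + 1 = m := by omega
      unfold wBL lslope rslope
      rw [if_neg (by omega), if_neg (by omega), if_pos (by omega : m - 1 < m), hm1]
      have hnum : P m - P (m - 1) ≤ 0 := by
        have := hPdec (m - 1) (by omega)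
        rw [hm1] at this; linarith
      have hden : 0 < K m - K (m - 1) := by
        have := hKmono (m - 1) (by omega)
        rw [hm1] at this; linarith
      have := div_nonpos_of_nonpos_of_nonneg hnum (le_of_lt hden)
      linarith
  -- the key algebraic identity, by downward induction
  have key : ∀ d j, j + d = m →
      ∑ k ∈ Finset.range (m + 1), wBL m K P k * max (K k - K j) 0 = P j := by
    intro d
    induction d with
    | zero =>
      intro j hj
      have hj' : j = m := by omega
      rw [hj', Finset.sum_eq_zero, hPm]
      intro k hk
      simp only [Finset.mem_range] at hk
      have : K k ≤ K m := hKle m le_rfl k (by omega)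
      rw [max_eq_right (by linarith), mul_zero]
    | succ d ih =>
      intro j hj
      have hjm : j < m := by omega
      have ih' := ih (j + 1) (by omega)
      have hKj : K j < K (j + 1) := hKmono j hjm
      have hdiff : (∑ k ∈ Finset.range (m + 1), wBL m K P k * max (K k - K j) 0)
          - ∑ k ∈ Finset.range (m + 1), wBL m K P k * max (K k - K (j + 1)) 0
          = P j - P (j + 1) := by
        rw [← Finset.sum_sub_distrib]
        have hsplit : ∑ k ∈ Finset.range (m + 1),
            (wBL m K P k * max (K k - K j) 0 - wBL m K P k * max (K k - K (j + 1)) 0)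
            = ∑ k ∈ Finset.Ico (j + 1) (m + 1), wBL m K P k * (K (j + 1) - K j) := by
          rw [Finset.range_eq_Ico,
            ← Finset.sum_Ico_consecutive _ (by omega : 0 ≤ j + 1) (by omega : j + 1 ≤ m + 1)]
          have hz : ∑ k ∈ Finset.Ico 0 (j + 1),
              (wBL m K P k * max (K k - K j) 0 - wBL m K P k * max (K k - K (j + 1)) 0) = 0 := by
            apply Finset.sum_eq_zero
            intro k hk
            simp only [Finset.mem_Ico] at hk
            have h1 : K k ≤ K j := hKle j (le_of_lt hjm) k (by omega)
            have h2 : K k ≤ K (j + 1) := le_trans h1 (le_of_lt hKj)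
            rw [max_eq_right (by linarith), max_eq_right (by linarith)]
            ring
          rw [hz, zero_add]
          apply Finset.sum_congr rfl
          intro k hk
          simp only [Finset.mem_Ico] at hk
          have h1 : K (j + 1) ≤ K k := hKle k (by omega) (j + 1) (by omega)
          rw [max_eq_left (by linarith), max_eq_left (by linarith)]
          ring
        rw [hsplit, ← Finset.sum_mul, wBL_tele m K P j (le_of_lt hjm)]
        unfold rslope
        rw [if_pos hjm]
        have hne : K (j + 1) - K j ≠ 0 := by linarith
        field_simp
        ring
      linarith
  -- reduce the integral to the finite sum
  intro j hj
  have hfm : Measurable fun x : ℝ => max (x - K j) 0 :=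
    (measurable_id.sub measurable_const).max measurable_const
  have hint : ∀ k ∈ Finset.range (m + 1),
      Integrable (fun x : ℝ => max (x - K j) 0)
        (ENNReal.ofReal (wBL m K P k) • Measure.dirac (K k)) := by
    intro k _
    refine Integrable.smul_measure ⟨hfm.aestronglyMeasurable, ?_⟩ ENNReal.ofReal_ne_top
    simp [HasFiniteIntegral, lintegral_dirac]
  rw [integral_finset_sum_measure hint]
  simp only [integral_smul_measure, integral_dirac, smul_eq_mul]
  have hc : ∀ k ∈ Finset.range (m + 1),
      (ENNReal.ofReal (wBL m K P k)).toReal * max (K k - K j) 0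
        = wBL m K P k * max (K k - K j) 0 := by
    intro k hk
    simp only [Finset.mem_range] at hk
    rw [ENNReal.toReal_ofReal (hw k (by omega))]
  rw [Finset.sum_congr rfl hc]
  exact key (m - j) j (by omega)
end
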